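/- Let E = EuclideanSpace ℝ (Fin d), J : E → ℝ differentiable with L̂-Lipschitz gradient (L̂ ≥ 0), λ > L̂, and for each w ∈ E let θ̂(w) be the unique global maximizer of θ ↦ J(θ) − (λ/2)‖θ − w‖². Then the proximal map w ↦ θ̂(w) is Lipschitz with constant λ/(λ − L̂): for all w, v ∈ E, ‖θ̂(w) − θ̂(v)‖ ≤ (λ/(λ − L̂))‖w − v‖. -/

import Mathlib

open RealInnerProductSpace

/-- First-order optimality condition for the proximal maximizer. -/
lemma moreau_prox_grad_eq
    (d : ℕ)
    (J : EuclideanSpace ℝ (Fin d) → ℝ) (lam : ℝ) (hJ : Differentiable ℝ J)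
    (w u : EuclideanSpace ℝ (Fin d))
    (hmax : ∀ θ : EuclideanSpace ℝ (Fin d),
      J θ - lam / 2 * ‖θ - w‖ ^ 2 ≤ J u - lam / 2 * ‖u - w‖ ^ 2) :
    gradient J u = lam • (u - w) := by
  set g : EuclideanSpace ℝ (Fin d) → ℝ := fun θ => J θ - lam / 2 * ‖θ - w‖ ^ 2 with hg
  have hD : HasFDerivAt g
      ((fderiv ℝ J u) - (lam / 2) • (2 • (innerSL ℝ (u - w)).comp
        (ContinuousLinearMap.id ℝ (EuclideanSpace ℝ (Fin d))))) u := by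
    have h1 : HasFDerivAt (fun θ : EuclideanSpace ℝ (Fin d) => ‖θ - w‖ ^ 2)
        (2 • (innerSL ℝ (u - w)).comp (ContinuousLinearMap.id ℝ (EuclideanSpace ℝ (Fin d)))) u := by
      simpa using ((hasFDerivAt_id u).sub_const w).norm_sq
    exact ((hJ u).hasFDerivAt).sub (h1.const_smul (lam / 2))
  have hloc : IsLocalMax g u := by
    apply Filter.Eventually.of_forall
    intro θ
    exact hmax θ
  have hzero : fderiv ℝ g u = 0 := hloc.fderiv_eq_zero
  have hDeq := hD.fderiv
  rw [hzero] at hDeq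
  have hfJ : ∀ y, fderiv ℝ J u y = lam * ⟪u - w, y⟫ := by
    intro y
    have := congrArg (fun (T : EuclideanSpace ℝ (Fin d) →L[ℝ] ℝ) => T y) hDeq.symm
    simp only [ContinuousLinearMap.zero_apply, ContinuousLinearMap.sub_apply,
      ContinuousLinearMap.smul_apply, ContinuousLinearMap.coe_smul', Pi.smul_apply,
      ContinuousLinearMap.coe_comp', Function.comp_apply, ContinuousLinearMap.coe_id', id_eq,
      innerSL_apply_apply, smul_eq_mul, nsmul_eq_mul, Nat.cast_ofNat] at this
    linarith [this]
  have hgradJ : ∀ y, ⟪gradient J u, y⟫ = fderiv ℝ J u y := by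
    intro y
    have h1 : HasGradientAt J (gradient J u) u := (hJ u).hasGradientAt
    have h2 : HasFDerivAt J
        ((InnerProductSpace.toDual ℝ (EuclideanSpace ℝ (Fin d))) (gradient J u)) u :=
      (hasGradientAt_iff_hasFDerivAt).mp h1
    rw [h2.fderiv]
    simp [InnerProductSpace.toDual_apply_apply]
  apply ext_inner_right ℝ
  intro y
  rw [hgradJ y, hfJ y, real_inner_smul_left]

/-- The proximal map `w ↦ θ̂(w)` is `λ/(λ − L̂)`-Lipschitz. -/
theorem moreau_proximal_map_lipschitz
    (d : ℕ) (hd : 0 < d)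
    (J : EuclideanSpace ℝ (Fin d) → ℝ) (Lhat lam : ℝ)
    (hLhat : 0 ≤ Lhat) (hJ : Differentiable ℝ J)
    (hLip : ∀ x y, ‖gradient J x - gradient J y‖ ≤ Lhat * ‖x - y‖)
    (hlam : Lhat < lam)
    (θhat : EuclideanSpace ℝ (Fin d) → EuclideanSpace ℝ (Fin d))
    (hθhat : ∀ w θ : EuclideanSpace ℝ (Fin d),
      J θ - lam / 2 * ‖θ - w‖ ^ 2 ≤ J (θhat w) - lam / 2 * ‖θhat w - w‖ ^ 2) :
    ∀ w v : EuclideanSpace ℝ (Fin d),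
      ‖θhat w - θhat v‖ ≤ lam / (lam - Lhat) * ‖w - v‖ := by
  intro w v
  have hw : gradient J (θhat w) = lam • (θhat w - w) :=
    moreau_prox_grad_eq d J lam hJ w (θhat w) (hθhat w)
  have hv : gradient J (θhat v) = lam • (θhat v - v) :=
    moreau_prox_grad_eq d J lam hJ v (θhat v) (hθhat v)
  have key : lam • (θhat w - θhat v) =
      lam • (w - v) + (gradient J (θhat w) - gradient J (θhat v)) := by
    rw [hw, hv]
    module
  have hnorm : lam * ‖θhat w - θhat v‖ ≤ lam * ‖w - v‖ + Lhat * ‖θhat w - θhat v‖ := by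
    calc lam * ‖θhat w - θhat v‖ = ‖lam • (θhat w - θhat v)‖ := by
          rw [norm_smul, Real.norm_eq_abs, abs_of_pos (lt_of_le_of_lt hLhat hlam)]
      _ ≤ ‖lam • (w - v)‖ + ‖gradient J (θhat w) - gradient J (θhat v)‖ := by
          rw [key]; exact norm_add_le _ _
      _ ≤ lam * ‖w - v‖ + Lhat * ‖θhat w - θhat v‖ := by
          rw [norm_smul, Real.norm_eq_abs, abs_of_pos (lt_of_le_of_lt hLhat hlam)]
          exact add_le_add_right (hLip _ _) _
  rw [div_mul_eq_mul_div, le_div_iff₀ (by linarith)]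
  nlinarith [norm_nonneg (θhat w - θhat v), norm_nonneg (w - v)]
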